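/- Let c₀ : [0,T] → ℝ be continuous with c₀ ≥ 0, let c : [0,T] → ℝ be C¹, let λ ≥ 0, and let u : [0,T] → ℝ solve u'' + λ² c₀(t) u = 0. Suppose c(t) ≥ ν > 0, |c'(t)| ≤ K₁, and |c(t) - c₀(t)| ≤ K₂ on [0,T]. Then with E(t) := |u'(t)|² + λ² c(t)|u(t)|², one has E(t) ≤ E(0)·exp( (K₁/ν + λK₂/√ν)·t ) for all t ∈ [0,T]. -/

import Mathlib

theorem stmt_12 (T ν lamk K₁ K₂ : ℝ) (c c' c₀ u u' : ℝ → ℝ)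
    (hT : 0 < T) (hν : 0 < ν) (hlam : 0 ≤ lamk)
    (hc₀ : Continuous c₀)
    (hc₀nonneg : ∀ t ∈ Set.Icc (0:ℝ) T, 0 ≤ c₀ t)
    (hc : ∀ t, HasDerivAt c (c' t) t)
    (hclow : ∀ t ∈ Set.Icc (0:ℝ) T, ν ≤ c t)
    (hc' : ∀ t ∈ Set.Icc (0:ℝ) T, |c' t| ≤ K₁)
    (hcc₀ : ∀ t ∈ Set.Icc (0:ℝ) T, |c t - c₀ t| ≤ K₂)
    (hu : ∀ t, HasDerivAt u (u' t) t)
    (hu' : ∀ t, HasDerivAt u' (-(lamk ^ 2 * c₀ t * u t)) t) :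
    ∀ t ∈ Set.Icc (0:ℝ) T,
      (u' t) ^ 2 + lamk ^ 2 * c t * (u t) ^ 2 ≤
        ((u' 0) ^ 2 + lamk ^ 2 * c 0 * (u 0) ^ 2) *
          Real.exp ((K₁ / ν + lamk * K₂ / Real.sqrt ν) * t) := by
  have h0mem : (0:ℝ) ∈ Set.Icc (0:ℝ) T := ⟨le_refl _, hT.le⟩
  have hK₁ : 0 ≤ K₁ := le_trans (abs_nonneg _) (hc' 0 h0mem)
  have hK₂ : 0 ≤ K₂ := le_trans (abs_nonneg _) (hcc₀ 0 h0mem)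
  set s : ℝ := Real.sqrt ν with hsdef
  have hs0 : 0 < s := Real.sqrt_pos.2 hν
  have hsq : s ^ 2 = ν := Real.sq_sqrt hν.le
  set α : ℝ := K₁ / ν + lamk * K₂ / s with hαdef
  have hα : 0 ≤ α := by positivity
  set E : ℝ → ℝ := fun t => u' t ^ 2 + lamk ^ 2 * c t * u t ^ 2 with hEdef
  set F : ℝ → ℝ := fun t => E t * Real.exp (-(α * t)) with hFdef
  set D : ℝ → ℝ := fun t =>
    lamk ^ 2 * c' t * u t ^ 2 + 2 * lamk ^ 2 * (c t - c₀ t) * u t * u' t with hDdef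
  have hE : ∀ t, HasDerivAt E (D t) t := by
    intro t
    have h1 : HasDerivAt (fun t => u' t ^ 2)
        ((2 : ℕ) * u' t ^ 1 * -(lamk ^ 2 * c₀ t * u t)) t := (hu' t).pow 2
    have h2 : HasDerivAt (fun t => u t ^ 2) ((2 : ℕ) * u t ^ 1 * u' t) t := (hu t).pow 2
    have h3 : HasDerivAt (fun t => lamk ^ 2 * (c t * u t ^ 2))
        (lamk ^ 2 * (c' t * u t ^ 2 + c t * ((2 : ℕ) * u t ^ 1 * u' t))) t :=
      ((hc t).mul h2).const_mul (lamk ^ 2)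
    have := h1.add h3
    have heq : E = fun t => u' t ^ 2 + lamk ^ 2 * (c t * u t ^ 2) := by
      funext x; simp [hEdef]; ring
    rw [heq]
    refine this.congr_deriv ?_
    simp [hDdef]; ring
  have hexp : ∀ t : ℝ, HasDerivAt (fun t => Real.exp (-(α * t)))
      (Real.exp (-(α * t)) * -α) t := by
    intro t
    have : HasDerivAt (fun t : ℝ => -(α * t)) (-α) t := by
      exact ((hasDerivAt_id t).const_mul α).neg.congr_deriv (by simp)
    simpa using this.exp
  have hF : ∀ t, HasDerivAt F (D t * Real.exp (-(α * t)) + E t * (Real.exp (-(α * t)) * -α)) t :=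
    fun t => (hE t).mul (hexp t)
  -- derivative of F is nonpositive on the interior
  have hderiv_nonpos : ∀ x ∈ Set.Ioo (0:ℝ) T, deriv F x ≤ 0 := by
    intro x hx
    have hxI : x ∈ Set.Icc (0:ℝ) T := ⟨hx.1.le, hx.2.le⟩
    rw [(hF x).deriv]
    have hDle : D x ≤ α * E x := by
      have hc'x : c' x ≤ K₁ := (abs_le.1 (hc' x hxI)).2
      have hcx : ν ≤ c x := hclow x hxI
      have hcc1 : c x - c₀ x ≤ K₂ := (abs_le.1 (hcc₀ x hxI)).2
      have hcc2 : -K₂ ≤ c x - c₀ x := (abs_le.1 (hcc₀ x hxI)).1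
      -- replace ν by s^2
      rw [hαdef, hEdef, hDdef]
      rw [← hsq] at hcx ⊢
      have hP1 : lamk ^ 2 * c' x * u x ^ 2 ≤ K₁ / s ^ 2 * (lamk ^ 2 * c x * u x ^ 2) := by
        rw [div_mul_eq_mul_div, le_div_iff₀ (by positivity : (0:ℝ) < s ^ 2)]
        nlinarith [sq_nonneg (lamk * u x), mul_nonneg hK₁ (sub_nonneg.2 hcx),
          mul_nonneg (sq_nonneg (lamk * u x)) (mul_nonneg hK₁ (sub_nonneg.2 hcx)),
          mul_nonneg (sq_nonneg (lamk * u x)) (mul_nonneg (sub_nonneg.2 hc'x) (sq_nonneg s))]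
      have hP2 : 2 * lamk ^ 2 * (c x - c₀ x) * u x * u' x ≤
          lamk * K₂ / s * (u' x ^ 2 + lamk ^ 2 * c x * u x ^ 2) := by
        rw [div_mul_eq_mul_div, le_div_iff₀ hs0]
        rcases le_or_gt 0 (u x * u' x) with huu | huu
        · nlinarith [mul_nonneg (mul_nonneg hK₂ hlam) (sq_nonneg (u' x - lamk * s * u x)),
            mul_nonneg (mul_nonneg (mul_nonneg (sub_nonneg.2 hcc1) (sq_nonneg lamk)) hs0.le) huu,
            mul_nonneg (mul_nonneg (mul_nonneg (mul_nonneg hK₂ hlam) (sq_nonneg lamk))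
              (sub_nonneg.2 hcx)) (sq_nonneg (u x))]
        · nlinarith [mul_nonneg (mul_nonneg hK₂ hlam) (sq_nonneg (u' x + lamk * s * u x)),
            mul_nonneg (mul_nonneg (mul_nonneg (sub_nonneg.2 hcc2) (sq_nonneg lamk)) hs0.le)
              (neg_nonneg.2 huu.le),
            mul_nonneg (mul_nonneg (mul_nonneg (mul_nonneg hK₂ hlam) (sq_nonneg lamk))
              (sub_nonneg.2 hcx)) (sq_nonneg (u x))]
      calc lamk ^ 2 * c' x * u x ^ 2 + 2 * lamk ^ 2 * (c x - c₀ x) * u x * u' x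
          ≤ K₁ / s ^ 2 * (lamk ^ 2 * c x * u x ^ 2) +
            lamk * K₂ / s * (u' x ^ 2 + lamk ^ 2 * c x * u x ^ 2) := add_le_add hP1 hP2
        _ ≤ (K₁ / s ^ 2 + lamk * K₂ / s) * (u' x ^ 2 + lamk ^ 2 * c x * u x ^ 2) := by
            have hK1s : 0 ≤ K₁ / s ^ 2 := by positivity
            nlinarith [mul_nonneg hK1s (sq_nonneg (u' x))]
    have hexp0 : (0:ℝ) < Real.exp (-(α * x)) := Real.exp_pos _
    have : D x * Real.exp (-(α * x)) + E x * (Real.exp (-(α * x)) * -α) =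
        (D x - α * E x) * Real.exp (-(α * x)) := by ring
    rw [this]
    exact mul_nonpos_of_nonpos_of_nonneg (by linarith) hexp0.le
  have hcont : ContinuousOn F (Set.Icc 0 T) :=
    (fun x _ => ((hF x).differentiableAt.continuousAt).continuousWithinAt)
  have hanti : AntitoneOn F (Set.Icc 0 T) := by
    apply antitoneOn_of_deriv_nonpos (convex_Icc 0 T) hcont
    · exact fun x _ => (hF x).differentiableAt.differentiableWithinAt
    · intro x hx
      rw [interior_Icc] at hx
      exact hderiv_nonpos x hx
  intro t ht
  have hFle : F t ≤ F 0 := hanti h0mem ht ht.1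
  have hF0 : F 0 = E 0 := by simp [hFdef]
  rw [hF0] at hFle
  have hfinal := mul_le_mul_of_nonneg_right hFle (Real.exp_nonneg (α * t))
  have : E t * Real.exp (-(α * t)) * Real.exp (α * t) = E t := by
    rw [mul_assoc, ← Real.exp_add]; simp
  rw [hFdef] at hfinal
  simp only at hfinal
  rw [this] at hfinal
  simpa [hEdef, hαdef, hsdef] using hfinal
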